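/- Let T = co(x_0,...,x_n) be a simplex of diameter h and μ : T → ℝ affine with ‖∇μ‖_∞ ≤ D^μ, and P : T → 𝒮_n the matrix-valued function whose entries P_{ij} are affine with ‖∇P_{ij}‖₁ ≤ D for all i,j. Then for any x = Σ_k λ_k x_k ∈ T (barycentric coordinates), ‖μ(x)P(x) − Σ_k λ_k μ(x_k)P(x_k)‖₂ ≤ 2 n √n D D^μ h². -/

import Mathlib

open Matrix

/-- Euclidean norm on `Fin n → ℝ`. -/
noncomputable def euclNorm {n : ℕ} (x : Fin n → ℝ) : ℝ := Real.sqrt (∑ i, x i ^ 2)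

/-- Spectral (ℓ²-operator) norm of a real `n×n` matrix. -/
noncomputable def spectralNormMat {n : ℕ} (A : Matrix (Fin n) (Fin n) ℝ) : ℝ :=
  sSup {r : ℝ | ∃ x : Fin n → ℝ, euclNorm x = 1 ∧ r = euclNorm (A.mulVec x)}

/-- interpolation error for the product `μ(x)P(x)` of an affine scalar function
`μ` (with `‖∇μ‖_∞ ≤ Dμ`) and a matrix-valued function `P` with affine symmetric-matrix values
(entry gradients bounded by `D` in the ℓ¹ norm), on a simplex of diameter `h`:
`‖μ(x)P(x) - Σ_k λ_k μ(x_k)P(x_k)‖₂ ≤ 2 n √n D Dμ h²`. -/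

lemma euclNorm_nonneg {n : ℕ} (z : Fin n → ℝ) : 0 ≤ euclNorm z := Real.sqrt_nonneg _

lemma abs_apply_le_euclNorm {n : ℕ} (z : Fin n → ℝ) (l : Fin n) : |z l| ≤ euclNorm z := by
  rw [euclNorm, ← Real.sqrt_sq_eq_abs]
  exact Real.sqrt_le_sqrt (Finset.single_le_sum (fun i _ => sq_nonneg (z i)) (Finset.mem_univ l))

lemma l1_le_sqrt_mul_euclNorm {n : ℕ} (z : Fin n → ℝ) :
    ∑ l, |z l| ≤ Real.sqrt n * euclNorm z := by
  have h1 : (∑ l, |z l|) ^ 2 ≤ (n : ℝ) * ∑ l, z l ^ 2 := by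
    simpa [sq_abs] using sq_sum_le_card_mul_sum_sq (s := Finset.univ) (f := fun l : Fin n => |z l|)
  have h2 : ∑ l, |z l| = Real.sqrt ((∑ l, |z l|) ^ 2) := by
    rw [Real.sqrt_sq (Finset.sum_nonneg fun l _ => abs_nonneg _)]
  rw [h2, euclNorm, ← Real.sqrt_mul (Nat.cast_nonneg n)]
  exact Real.sqrt_le_sqrt h1

lemma abs_dot_le {n : ℕ} (w z : Fin n → ℝ) : |w ⬝ᵥ z| ≤ ∑ l, |w l| * |z l| := by
  simpa [abs_mul, dotProduct] using Finset.abs_sum_le_sum_abs (fun l => w l * z l) Finset.univ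

lemma quad_interp {m : ℕ} (lam : Fin m → ℝ) (hsum : ∑ k, lam k = 1)
    (α β : Fin m → ℝ) (y z cμ c : ℝ)
    (hy : y = ∑ k, lam k * α k) (hz : z = ∑ k, lam k * β k) :
    (y + cμ) * (z + c) - ∑ k, lam k * ((α k + cμ) * (β k + c)) =
      -∑ k, lam k * ((α k - y) * (β k - z)) := by
  have h1 : ∑ k, lam k * ((α k + cμ) * (β k + c)) =
      ∑ k, lam k * (α k * β k) + cμ * ∑ k, lam k * β k + c * ∑ k, lam k * α k
        + cμ * c * ∑ k, lam k := by
    simp only [Finset.mul_sum, ← Finset.sum_add_distrib]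
    exact Finset.sum_congr rfl fun k _ => by ring
  have h2 : ∑ k, lam k * ((α k - y) * (β k - z)) =
      ∑ k, lam k * (α k * β k) - y * ∑ k, lam k * β k - z * ∑ k, lam k * α k
        + y * z * ∑ k, lam k := by
    simp only [Finset.mul_sum, ← Finset.sum_add_distrib, ← Finset.sum_sub_distrib]
    exact Finset.sum_congr rfl fun k _ => by ring
  rw [h1, h2, hsum, ← hy, ← hz]; ring


theorem interpolation_error_mu_P {n : ℕ}
    (v : Fin (n + 1) → (Fin n → ℝ)) (hv : AffineIndependent ℝ v)
    (h D Dμ : ℝ)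
    (hdiam : ∀ p ∈ convexHull ℝ (Set.range v), ∀ q ∈ convexHull ℝ (Set.range v),
      euclNorm (p - q) ≤ h)
    (a : Fin n → ℝ) (cμ : ℝ) (μ : (Fin n → ℝ) → ℝ)
    (hμ : ∀ y, μ y = a ⬝ᵥ y + cμ) (ha : (⨆ i, |a i|) ≤ Dμ)
    (W : Fin n → Fin n → (Fin n → ℝ)) (c₀ : Matrix (Fin n) (Fin n) ℝ)
    (P : (Fin n → ℝ) → Matrix (Fin n) (Fin n) ℝ)
    (hP : ∀ y i j, P y i j = W i j ⬝ᵥ y + c₀ i j)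
    (hPsymm : ∀ y, y ∈ convexHull ℝ (Set.range v) → (P y).IsSymm)
    (hW : ∀ i j, (∑ k, |W i j k|) ≤ D)
    (lam : Fin (n + 1) → ℝ) (hlam0 : ∀ k, 0 ≤ lam k) (hsum : ∑ k, lam k = 1)
    (x : Fin n → ℝ) (hbar : x = ∑ k, lam k • v k) :
    spectralNormMat (μ x • P x - ∑ k, lam k • (μ (v k) • P (v k))) ≤
      2 * n * Real.sqrt n * D * Dμ * h ^ 2 := by
  rcases Nat.eq_zero_or_pos n with hn | hn
  · subst hn
    have hset : {r : ℝ | ∃ u : Fin 0 → ℝ, euclNorm u = 1 ∧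
        r = euclNorm ((μ x • P x - ∑ k, lam k • (μ (v k) • P (v k))).mulVec u)} = ∅ := by
      ext r
      simp [euclNorm]
    rw [spectralNormMat, hset, Real.sSup_empty]
    norm_num
  -- main case
  have hx : x ∈ convexHull ℝ (Set.range v) := by
    have := Finset.centerMass_mem_convexHull (Finset.univ) (w := lam)
      (fun k _ => hlam0 k) (by rw [hsum]; norm_num)
      (z := v) (fun k _ => Set.mem_range_self k)
    rwa [Finset.centerMass_eq_of_sum_1 _ _ hsum, ← hbar] at this
  have hvx : ∀ k, euclNorm (v k - x) ≤ h := fun k =>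
    hdiam _ (subset_convexHull ℝ _ (Set.mem_range_self k)) _ hx
  have h0 : 0 ≤ h := by
    have := hdiam x hx x hx
    simpa [euclNorm] using this
  set i0 : Fin n := ⟨0, hn⟩
  have hD : 0 ≤ D := le_trans (Finset.sum_nonneg fun k _ => abs_nonneg _) (hW i0 i0)
  have habs : ∀ l, |a l| ≤ Dμ := fun l =>
    le_trans (le_ciSup (Set.Finite.bddAbove (Set.finite_range (fun i => |a i|))) l) ha
  have hDμ : 0 ≤ Dμ := le_trans (abs_nonneg (a i0)) (habs i0)
  set C : ℝ := Real.sqrt n * D * Dμ * h ^ 2 with hC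
  have hCnn : 0 ≤ C := by positivity
  set E := μ x • P x - ∑ k, lam k • (μ (v k) • P (v k)) with hE
  have hentry : ∀ i j, |E i j| ≤ C := by
    intro i j
    have hax : a ⬝ᵥ x = ∑ k, lam k * (a ⬝ᵥ v k) := by
      rw [hbar]
      simp only [dotProduct, Finset.sum_apply, Pi.smul_apply, smul_eq_mul, Finset.mul_sum]
      rw [Finset.sum_comm]
      exact Finset.sum_congr rfl fun k _ => Finset.sum_congr rfl fun l _ => by ring
    have hwx : W i j ⬝ᵥ x = ∑ k, lam k * (W i j ⬝ᵥ v k) := by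
      rw [hbar]
      simp only [dotProduct, Finset.sum_apply, Pi.smul_apply, smul_eq_mul, Finset.mul_sum]
      rw [Finset.sum_comm]
      exact Finset.sum_congr rfl fun k _ => Finset.sum_congr rfl fun l _ => by ring
    have hEij : E i j = (a ⬝ᵥ x + cμ) * (W i j ⬝ᵥ x + c₀ i j)
        - ∑ k, lam k * ((a ⬝ᵥ v k + cμ) * (W i j ⬝ᵥ v k + c₀ i j)) := by
      simp [hE, Matrix.sub_apply, Matrix.smul_apply, Matrix.sum_apply, smul_eq_mul, hμ, hP]
    rw [hEij, quad_interp lam hsum _ _ _ _ _ _ hax hwx, abs_neg]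
    have hterm : ∀ k, |lam k * ((a ⬝ᵥ v k - a ⬝ᵥ x) * (W i j ⬝ᵥ v k - W i j ⬝ᵥ x))|
        ≤ lam k * C := by
      intro k
      have hzk : euclNorm (v k - x) ≤ h := hvx k
      have hA : |a ⬝ᵥ v k - a ⬝ᵥ x| ≤ Dμ * (Real.sqrt n * h) := by
        rw [← dotProduct_sub]
        refine le_trans (abs_dot_le a (v k - x)) ?_
        calc ∑ l, |a l| * |(v k - x) l| ≤ ∑ l, Dμ * |(v k - x) l| :=
              Finset.sum_le_sum fun l _ => mul_le_mul_of_nonneg_right (habs l) (abs_nonneg _)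
          _ = Dμ * ∑ l, |(v k - x) l| := by rw [Finset.mul_sum]
          _ ≤ Dμ * (Real.sqrt n * euclNorm (v k - x)) := by
              exact mul_le_mul_of_nonneg_left (l1_le_sqrt_mul_euclNorm _) hDμ
          _ ≤ Dμ * (Real.sqrt n * h) := by
              exact mul_le_mul_of_nonneg_left
                (mul_le_mul_of_nonneg_left hzk (Real.sqrt_nonneg _)) hDμ
      have hB : |W i j ⬝ᵥ v k - W i j ⬝ᵥ x| ≤ D * h := by
        rw [← dotProduct_sub]
        refine le_trans (abs_dot_le _ (v k - x)) ?_
        calc ∑ l, |W i j l| * |(v k - x) l| ≤ ∑ l, |W i j l| * euclNorm (v k - x) :=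
              Finset.sum_le_sum fun l _ =>
                mul_le_mul_of_nonneg_left (abs_apply_le_euclNorm _ l) (abs_nonneg _)
          _ = (∑ l, |W i j l|) * euclNorm (v k - x) := by rw [Finset.sum_mul]
          _ ≤ D * h := mul_le_mul (hW i j) hzk (euclNorm_nonneg _) hD
      rw [abs_mul, abs_of_nonneg (hlam0 k), abs_mul]
      have : |a ⬝ᵥ v k - a ⬝ᵥ x| * |W i j ⬝ᵥ v k - W i j ⬝ᵥ x|
          ≤ (Dμ * (Real.sqrt n * h)) * (D * h) :=
        mul_le_mul hA hB (abs_nonneg _) (by positivity)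
      refine mul_le_mul_of_nonneg_left (le_trans this (le_of_eq ?_)) (hlam0 k)
      rw [hC]; ring
    calc |∑ k, lam k * ((a ⬝ᵥ v k - a ⬝ᵥ x) * (W i j ⬝ᵥ v k - W i j ⬝ᵥ x))|
        ≤ ∑ k, |lam k * ((a ⬝ᵥ v k - a ⬝ᵥ x) * (W i j ⬝ᵥ v k - W i j ⬝ᵥ x))| :=
          Finset.abs_sum_le_sum_abs _ _
      _ ≤ ∑ k, lam k * C := Finset.sum_le_sum fun k _ => hterm k
      _ = C := by rw [← Finset.sum_mul, hsum, one_mul]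
  -- spectral norm bound
  rw [spectralNormMat]
  apply Real.sSup_le
  · rintro r ⟨u, hu, rfl⟩
    have hrow : ∀ i, |E.mulVec u i| ≤ Real.sqrt n * C := by
      intro i
      calc |E.mulVec u i| = |∑ j, E i j * u j| := by rw [Matrix.mulVec, dotProduct]
        _ ≤ ∑ j, |E i j| * |u j| := by
            simpa [abs_mul] using Finset.abs_sum_le_sum_abs (fun j => E i j * u j) Finset.univ
        _ ≤ ∑ j, C * |u j| := Finset.sum_le_sum fun j _ =>
            mul_le_mul_of_nonneg_right (hentry i j) (abs_nonneg _)
        _ = C * ∑ j, |u j| := by rw [Finset.mul_sum]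
        _ ≤ C * (Real.sqrt n * euclNorm u) :=
            mul_le_mul_of_nonneg_left (l1_le_sqrt_mul_euclNorm u) hCnn
        _ = Real.sqrt n * C := by rw [hu]; ring
    have hsq : ∀ i, (E.mulVec u i) ^ 2 ≤ (Real.sqrt n * C) ^ 2 := by
      intro i
      rw [← sq_abs (E.mulVec u i)]
      exact pow_le_pow_left₀ (abs_nonneg _) (hrow i) 2
    have h1 : euclNorm (E.mulVec u) ≤ Real.sqrt ((n : ℝ) * (Real.sqrt n * C) ^ 2) := by
      rw [euclNorm]
      apply Real.sqrt_le_sqrt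
      calc ∑ i, (E.mulVec u i) ^ 2 ≤ ∑ _i : Fin n, (Real.sqrt n * C) ^ 2 :=
            Finset.sum_le_sum fun i _ => hsq i
        _ = (n : ℝ) * (Real.sqrt n * C) ^ 2 := by
            rw [Finset.sum_const, Finset.card_univ, Fintype.card_fin, nsmul_eq_mul]
    have h2 : Real.sqrt ((n : ℝ) * (Real.sqrt n * C) ^ 2)
        = Real.sqrt n * (Real.sqrt n * C) := by
      rw [Real.sqrt_mul (Nat.cast_nonneg n),
        Real.sqrt_sq (by positivity : (0:ℝ) ≤ Real.sqrt n * C)]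
    refine le_trans h1 (le_trans (le_of_eq h2) ?_)
    have hnn : Real.sqrt n * Real.sqrt n = (n : ℝ) := Real.mul_self_sqrt (Nat.cast_nonneg n)
    calc Real.sqrt n * (Real.sqrt n * C) = (n : ℝ) * C := by rw [← mul_assoc, hnn]
      _ ≤ 2 * n * Real.sqrt n * D * Dμ * h ^ 2 := by
          rw [hC]
          nlinarith [Real.sqrt_nonneg (n : ℝ), sq_nonneg h, Nat.cast_nonneg (α := ℝ) n,
            mul_nonneg hD hDμ, mul_nonneg (mul_nonneg hD hDμ) (sq_nonneg h),
            mul_nonneg (Real.sqrt_nonneg (n:ℝ)) (mul_nonneg (mul_nonneg hD hDμ) (sq_nonneg h)),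
            (Nat.one_le_cast (α := ℝ)).mpr hn]
  · positivity
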